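/- If [s⃗] and [t⃗] are leading positive basis elements of ℋ_ℤ (i.e., their first entries are positive), then the extended shuffle product [s⃗] ⧢ [t⃗] is a ℚ-linear combination of leading positive basis elements. -/

import Mathlib

noncomputable section

/-- The vector space ℋ_ℤ with basis the symbols `[s₁,…,s_k]` (lists of integers),
the empty list being the unit `1`. -/
abbrev HZ : Type := List ℤ →₀ ℚ

/-- The basis symbol `[s₁,…,s_k]`. -/
def bs (l : List ℤ) : HZ := Finsupp.single l 1

/-- Linear extension of a map defined on basis symbols. -/
def hlift (f : List ℤ → HZ) : HZ →ₗ[ℚ] HZ := Finsupp.lift HZ ℚ (List ℤ) f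

/-- Prepending a `0` entry to every basis symbol. -/
def preZ : HZ →ₗ[ℚ] HZ := hlift fun l => bs (0 :: l)

/-- The operator `I` adding 1 to the first entry. -/
def Imap : HZ →ₗ[ℚ] HZ := hlift fun l =>
  match l with
  | [] => 0
  | s :: r => bs ((s + 1) :: r)

/-- The operator `J` subtracting 1 from the first entry, with `J(1) = 0`. -/
def Jmap : HZ →ₗ[ℚ] HZ := hlift fun l =>
  match l with
  | [] => 0
  | s :: r => bs ((s - 1) :: r)

/-- The five-case recursion defining the extended shuffle product on ℋ_ℤ. -/
def IsExtShuffle (m : HZ →ₗ[ℚ] HZ →ₗ[ℚ] HZ) : Prop :=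
  (∀ x, m (bs []) x = x) ∧
  (∀ x, m x (bs []) = x) ∧
  (∀ (s' : List ℤ) (t₁ : ℤ) (t' : List ℤ),
    m (bs (0 :: s')) (bs (t₁ :: t')) = preZ (m (bs s') (bs (t₁ :: t')))) ∧
  (∀ (s₁ : ℤ), 0 < s₁ → ∀ (s' t' : List ℤ),
    m (bs (s₁ :: s')) (bs (0 :: t')) = preZ (m (bs (s₁ :: s')) (bs t'))) ∧
  (∀ (s₁ t₁ : ℤ), 0 < s₁ → 0 < t₁ → ∀ (s' t' : List ℤ),
    m (bs (s₁ :: s')) (bs (t₁ :: t')) =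
      Imap (m (bs (s₁ :: s')) (bs ((t₁ - 1) :: t'))) +
      Imap (m (bs ((s₁ - 1) :: s')) (bs (t₁ :: t')))) ∧
  (∀ (s₁ t₁ : ℤ), 0 < s₁ → t₁ < 0 → ∀ (s' t' : List ℤ),
    m (bs (s₁ :: s')) (bs (t₁ :: t')) =
      Jmap (m (bs (s₁ :: s')) (bs ((t₁ + 1) :: t'))) -
      m (bs ((s₁ - 1) :: s')) (bs ((t₁ + 1) :: t'))) ∧
  (∀ (s₁ : ℤ), s₁ < 0 → ∀ (t₁ : ℤ) (s' t' : List ℤ),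
    m (bs (s₁ :: s')) (bs (t₁ :: t')) =
      Jmap (m (bs ((s₁ + 1) :: s')) (bs (t₁ :: t'))) -
      m (bs ((s₁ + 1) :: s')) (bs ((t₁ - 1) :: t')))


def Pspan : Submodule ℚ HZ :=
  Submodule.span ℚ {x : HZ | ∃ a : ℤ, 0 < a ∧ ∃ r : List ℤ, x = bs (a :: r)}

def Zspan : Submodule ℚ HZ :=
  Submodule.span ℚ {x : HZ | ∃ r : List ℤ, x = bs ((0:ℤ) :: r)}

lemma hlift_single (f : List ℤ → HZ) (l : List ℤ) : hlift f (bs l) = f l := by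
  simp [hlift, bs]

lemma preZ_mem (x : HZ) : preZ x ∈ Zspan := by
  induction x using Finsupp.induction_linear with
  | zero => simp
  | add a b ha hb => rw [map_add]; exact add_mem ha hb
  | single l c =>
      have : (Finsupp.single l c : HZ) = c • bs l := by
        simp [bs, Finsupp.smul_single]
      rw [this, map_smul]
      refine Submodule.smul_mem _ _ ?_
      rw [show preZ (bs l) = bs ((0:ℤ) :: l) from hlift_single _ l]
      exact Submodule.subset_span ⟨l, rfl⟩

lemma Imap_bs (a : ℤ) (r : List ℤ) : Imap (bs (a :: r)) = bs ((a + 1) :: r) :=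
  hlift_single _ (a :: r)

lemma Imap_Z {x : HZ} (hx : x ∈ Zspan) : Imap x ∈ Pspan := by
  refine Submodule.span_induction ?_ (by simp) (fun a b _ _ ha hb => by
    rw [map_add]; exact add_mem ha hb) (fun c a _ ha => by
    rw [map_smul]; exact Submodule.smul_mem _ _ ha) hx
  rintro x ⟨r, rfl⟩
  rw [Imap_bs]
  exact Submodule.subset_span ⟨1, one_pos, r, by norm_num⟩

lemma Imap_P {x : HZ} (hx : x ∈ Pspan) : Imap x ∈ Pspan := by
  refine Submodule.span_induction ?_ (by simp) (fun a b _ _ ha hb => by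
    rw [map_add]; exact add_mem ha hb) (fun c a _ ha => by
    rw [map_smul]; exact Submodule.smul_mem _ _ ha) hx
  rintro x ⟨a, ha, r, rfl⟩
  rw [Imap_bs]
  exact Submodule.subset_span ⟨a + 1, by omega, r, rfl⟩

lemma main_aux (m : HZ →ₗ[ℚ] HZ →ₗ[ℚ] HZ) (hm : IsExtShuffle m) :
    ∀ n : ℕ, ∀ s₁ t₁ : ℤ, 0 < s₁ → 0 < t₁ → s₁ + t₁ ≤ n →
      ∀ s' t' : List ℤ, m (bs (s₁ :: s')) (bs (t₁ :: t')) ∈ Pspan := by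
  obtain ⟨h1, h2, h3, h4, h5, h6, h7⟩ := hm
  intro n
  induction n with
  | zero => intro s₁ t₁ hs ht hle; omega
  | succ n ih =>
      intro s₁ t₁ hs ht hle s' t'
      rw [h5 s₁ t₁ hs ht s' t']
      refine add_mem ?_ ?_
      · rcases eq_or_lt_of_le (by omega : (1:ℤ) ≤ t₁) with h | h
        · have : t₁ - 1 = 0 := by omega
          rw [this, h4 s₁ hs s' t']
          exact Imap_Z (preZ_mem _)
        · exact Imap_P (ih s₁ (t₁ - 1) hs (by omega) (by omega) s' t')
      · rcases eq_or_lt_of_le (by omega : (1:ℤ) ≤ s₁) with h | h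
        · have : s₁ - 1 = 0 := by omega
          rw [this, h3 s' t₁ t']
          exact Imap_Z (preZ_mem _)
        · exact Imap_P (ih (s₁ - 1) t₁ (by omega) ht (by omega) s' t')

/-- The product of two leading positive basis elements is a linear combination of leading
positive basis elements. -/
theorem leadingPositive_mul (m : HZ →ₗ[ℚ] HZ →ₗ[ℚ] HZ) (hm : IsExtShuffle m)
    (s₁ t₁ : ℤ) (hs : 0 < s₁) (ht : 0 < t₁) (s' t' : List ℤ) :
    m (bs (s₁ :: s')) (bs (t₁ :: t')) ∈
      Submodule.span ℚ {x : HZ | ∃ a : ℤ, 0 < a ∧ ∃ r : List ℤ, x = bs (a :: r)} := by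
  exact main_aux m hm (s₁ + t₁).toNat s₁ t₁ hs ht (by omega) s' t'
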